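/- Let Θ and 𝒵 be measurable spaces, D a probability measure on 𝒵 (the data distribution), π a probability measure on Θ (the prior), n ≥ 1 a natural number, δ ∈ (0, 1], and let L : Θ → 𝒵 → ℝ be a jointly measurable loss (negative log likelihood) satisfying a ≤ L θ z ≤ b for all θ, z, where a < b are real numbers. Set c := (b − a) / (1 − Real.exp (a − b)). For a sample s : Fin n → 𝒵, define the marginal likelihood Z(s) := ∫_Θ Real.exp (− ∑_{i} L θ (s i)) dπ(θ) and the Gibbs (Bayesian) posterior ρ_s := π.withDensity (θ ↦ Real.exp (− ∑_i L θ (s i)) / Z(s)). Then, with respect to the n-fold product measure D^n := Measure.pi (fun _ : Fin n => D) on samples s : Fin n → 𝒵, the set of samples s for which ∫_Θ (∫_𝒵 L θ z dD(z)) dρ_s(θ) ≤ a + c · (1 − Real.exp a · (Z(s) · δ) ^ (1 / (n : ℝ))) has D^n-measure at least 1 − δ. -/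

import Mathlib

open MeasureTheory
open scoped ENNReal NNReal

/-- A measurable function bounded between two constants is integrable w.r.t. a
finite measure. -/
lemma pb_integrable_of_bounds {α : Type*} [MeasurableSpace α] {μ : Measure α}
    [IsFiniteMeasure μ] {f : α → ℝ} (hf : Measurable f) {lo hi : ℝ}
    (h : ∀ x, lo ≤ f x ∧ f x ≤ hi) : Integrable f μ := by
  refine (integrable_const (max |lo| |hi|)).mono' hf.aestronglyMeasurable
    (Filter.Eventually.of_forall fun x => ?_)
  rw [Real.norm_eq_abs, abs_le]
  constructor
  · have : -max |lo| |hi| ≤ -|lo| := neg_le_neg (le_max_left _ _)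
    have h2 : -|lo| ≤ lo := neg_abs_le lo
    linarith [(h x).1]
  · have : hi ≤ max |lo| |hi| := le_trans (le_abs_self hi) (le_max_right _ _)
    linarith [(h x).2]

/-- Jensen's inequality for the exponential function. -/
lemma pb_exp_integral_le {α : Type*} [MeasurableSpace α] {μ : Measure α}
    [IsProbabilityMeasure μ] {f : α → ℝ} (hfi : Integrable f μ)
    (hgi : Integrable (fun x => Real.exp (f x)) μ) :
    Real.exp (∫ x, f x ∂μ) ≤ ∫ x, Real.exp (f x) ∂μ :=
  convexOn_exp.map_integral_le Real.continuous_exp.continuousOn isClosed_univ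
    (Filter.Eventually.of_forall fun _ => trivial) hfi hgi

/-- Chord inequality for the convex function `x ↦ exp (-x)` on `[a, b]`. -/
lemma pb_exp_neg_le_chord {a b x : ℝ} (hab : a < b) (hx1 : a ≤ x) (hx2 : x ≤ b) :
    Real.exp (-x) ≤ Real.exp (-a)
      - (x - a) * ((Real.exp (-a) - Real.exp (-b)) / (b - a)) := by
  have hd : (0 : ℝ) < b - a := by linarith
  have ht1 : (0 : ℝ) ≤ (x - a) / (b - a) := div_nonneg (by linarith) hd.le
  have ht2 : (0 : ℝ) ≤ (b - x) / (b - a) := div_nonneg (by linarith) hd.le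
  have ht3 : (x - a) / (b - a) + (b - x) / (b - a) = 1 := by field_simp; ring
  have h := convexOn_exp.2 (Set.mem_univ (-b)) (Set.mem_univ (-a)) ht1 ht2 ht3
  have hxe : ((x - a) / (b - a)) • (-b) + ((b - x) / (b - a)) • (-a) = -x := by
    simp only [smul_eq_mul]
    field_simp
    ring
  rw [hxe, smul_eq_mul, smul_eq_mul] at h
  have heq : Real.exp (-a) - (x - a) * ((Real.exp (-a) - Real.exp (-b)) / (b - a))
      = (x - a) / (b - a) * Real.exp (-b) + (b - x) / (b - a) * Real.exp (-a) := by
    field_simp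
    ring
  rw [heq]
  exact h

set_option maxHeartbeats 2000000 in
/-- Corollary 2 of Germain et al. (PAC-Bayes bound, Appendix A): for a bounded negative
log likelihood loss `L` with values in `[a, b]`, with probability at least `1 − δ` over
an i.i.d. sample of size `n` from the data distribution `D`, the expected population
loss under the Gibbs (Bayesian) posterior `ρ s` is bounded by
`a + c (1 − e^a (Z(s) δ)^{1/n})`, where `Z(s)` is the marginal likelihood and
`c = (b − a)/(1 − e^{a−b})`. -/
theorem pac_bayes_germain_corollary2
    {Θ 𝒵 : Type*} [MeasurableSpace Θ] [MeasurableSpace 𝒵]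
    (D : Measure 𝒵) [IsProbabilityMeasure D]
    (π : Measure Θ) [IsProbabilityMeasure π]
    (n : ℕ) (hn : 1 ≤ n) (δ : ℝ) (hδ : 0 < δ) (hδ1 : δ ≤ 1)
    (a b : ℝ) (hab : a < b)
    (L : Θ → 𝒵 → ℝ) (hLmeas : Measurable (Function.uncurry L))
    (hLbound : ∀ θ z, a ≤ L θ z ∧ L θ z ≤ b)
    (c : ℝ) (hc : c = (b - a) / (1 - Real.exp (a - b)))
    (Z : (Fin n → 𝒵) → ℝ)
    (hZ : ∀ s, Z s = ∫ θ, Real.exp (-∑ i, L θ (s i)) ∂π)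
    (ρ : (Fin n → 𝒵) → Measure Θ)
    (hρ : ∀ s, ρ s = π.withDensity (fun θ =>
      ENNReal.ofReal (Real.exp (-∑ i, L θ (s i)) / Z s))) :
    ENNReal.ofReal (1 - δ) ≤
      (Measure.pi (fun _ : Fin n => D))
        {s | ∫ θ, (∫ z, L θ z ∂D) ∂(ρ s) ≤
          a + c * (1 - Real.exp a * (Z s * δ) ^ (1 / (n : ℝ)))} := by
  have hd : (0 : ℝ) < b - a := by linarith
  have hn0 : (n : ℝ) ≠ 0 := Nat.cast_ne_zero.mpr (by omega)
  have hL1 : ∀ θ, Measurable (L θ) := fun θ => hLmeas.of_uncurry_left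
  set P : Measure (Fin n → 𝒵) := Measure.pi fun _ : Fin n => D with hP
  haveI : IsProbabilityMeasure P := by
    rw [hP]; infer_instance
  -- population loss
  have h𝓛meas : Measurable fun θ => ∫ z, L θ z ∂D :=
    (hLmeas.stronglyMeasurable.integral_prod_right).measurable
  have hLint : ∀ θ, Integrable (L θ) D :=
    fun θ => pb_integrable_of_bounds (hL1 θ) (hLbound θ)
  have h𝓛b : ∀ θ, a ≤ (∫ z, L θ z ∂D) ∧ (∫ z, L θ z ∂D) ≤ b := by
    intro θ
    constructor
    · calc a = ∫ _, a ∂D := by simp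
        _ ≤ ∫ z, L θ z ∂D :=
          integral_mono (integrable_const a) (hLint θ) fun z => (hLbound θ z).1
    · calc (∫ z, L θ z ∂D) ≤ ∫ _, b ∂D :=
          integral_mono (hLint θ) (integrable_const b) fun z => (hLbound θ z).2
        _ = b := by simp
  -- the function M
  set M : Θ → ℝ := fun θ => ∫ z, Real.exp (-L θ z) ∂D with hMdef
  have hexpmeas : Measurable fun p : Θ × 𝒵 => Real.exp (-(Function.uncurry L p)) :=
    hLmeas.neg.exp
  have hMmeas : Measurable M := by
    have h := MeasureTheory.StronglyMeasurable.integral_prod_right (ν := D)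
      (f := fun θ z => Real.exp (-L θ z)) (by exact hexpmeas.stronglyMeasurable)
    exact h.measurable
  have hexpb : ∀ θ z, Real.exp (-b) ≤ Real.exp (-L θ z)
      ∧ Real.exp (-L θ z) ≤ Real.exp (-a) := fun θ z =>
    ⟨Real.exp_le_exp.2 (by linarith [(hLbound θ z).2]),
     Real.exp_le_exp.2 (by linarith [(hLbound θ z).1])⟩
  have hexpint : ∀ θ, Integrable (fun z => Real.exp (-L θ z)) D :=
    fun θ => pb_integrable_of_bounds (hL1 θ).neg.exp (hexpb θ)
  have hMb : ∀ θ, Real.exp (-b) ≤ M θ ∧ M θ ≤ Real.exp (-a) := by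
    intro θ
    constructor
    · calc Real.exp (-b) = ∫ _, Real.exp (-b) ∂D := by simp
        _ ≤ M θ := integral_mono (integrable_const _) (hexpint θ)
            fun z => (hexpb θ z).1
    · calc M θ ≤ ∫ _, Real.exp (-a) ∂D := integral_mono (hexpint θ)
            (integrable_const _) fun z => (hexpb θ z).2
        _ = Real.exp (-a) := by simp
  have hMpos : ∀ θ, 0 < M θ := fun θ => lt_of_lt_of_le (Real.exp_pos _) (hMb θ).1
  -- the chord constant
  set k : ℝ := (Real.exp (-a) - Real.exp (-b)) / (b - a) with hkdef
  have hk0 : 0 < k :=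
    div_pos (by have := Real.exp_lt_exp.2 (show -b < -a by linarith); linarith) hd
  have hck : c * k = Real.exp (-a) := by
    have h1 : 1 - Real.exp (a - b) = Real.exp a * (Real.exp (-a) - Real.exp (-b)) := by
      rw [mul_sub, ← Real.exp_add, ← Real.exp_add]
      simp [show a + -b = a - b from by ring]
    have hne : Real.exp (-a) - Real.exp (-b) ≠ 0 := by
      have := Real.exp_lt_exp.2 (show -b < -a by linarith); linarith
    have hexpa : Real.exp (-a) * Real.exp a = 1 := by
      rw [← Real.exp_add]; simp
    rw [hc, hkdef, h1]
    field_simp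
    linear_combination (-1 : ℝ) * hexpa
  -- chord bound on M
  have hMchord : ∀ θ, M θ ≤ Real.exp (-a) - ((∫ z, L θ z ∂D) - a) * k := by
    intro θ
    have hint1 : Integrable (fun z => L θ z - a) D := by
      exact (hLint θ).sub (integrable_const a)
    have hint2 : Integrable (fun z => (L θ z - a) * k) D := by
      exact hint1.mul_const k
    have hmono : M θ ≤ ∫ z, (Real.exp (-a) - (L θ z - a) * k) ∂D :=
      integral_mono (hexpint θ)
        (by exact (integrable_const (Real.exp (-a))).sub hint2)
        (fun z => pb_exp_neg_le_chord hab (hLbound θ z).1 (hLbound θ z).2)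
    calc M θ ≤ ∫ z, (Real.exp (-a) - (L θ z - a) * k) ∂D := hmono
      _ = Real.exp (-a) - ((∫ z, L θ z ∂D) - a) * k := by
        rw [integral_sub (integrable_const _) hint2]
        rw [integral_mul_const, integral_sub (hLint θ) (integrable_const a)]
        simp
  -- bounds on the exponentiated sums
  have hsumb : ∀ (s : Fin n → 𝒵) θ,
      (n : ℝ) * a ≤ ∑ i, L θ (s i) ∧ (∑ i, L θ (s i)) ≤ (n : ℝ) * b := by
    intro s θ
    constructor
    · have h1 : (∑ _i : Fin n, a) = (n : ℝ) * a := by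
        simp [Finset.sum_const, mul_comm]
      calc (n : ℝ) * a = ∑ _i : Fin n, a := h1.symm
        _ ≤ ∑ i, L θ (s i) := Finset.sum_le_sum fun i _ => (hLbound θ (s i)).1
    · calc (∑ i, L θ (s i)) ≤ ∑ _i : Fin n, b :=
          Finset.sum_le_sum fun i _ => (hLbound θ (s i)).2
        _ = (n : ℝ) * b := by simp [Finset.sum_const, mul_comm]
  have hnumb : ∀ (s : Fin n → 𝒵) θ,
      Real.exp (-((n : ℝ) * b)) ≤ Real.exp (-∑ i, L θ (s i))
      ∧ Real.exp (-∑ i, L θ (s i)) ≤ Real.exp (-((n : ℝ) * a)) := fun s θ =>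
    ⟨Real.exp_le_exp.2 (by linarith [(hsumb s θ).2]),
     Real.exp_le_exp.2 (by linarith [(hsumb s θ).1])⟩
  -- measurability of θ ↦ ∑ L θ (s i) for fixed s
  have hgmeas : ∀ s : Fin n → 𝒵, Measurable fun θ => ∑ i, L θ (s i) := by
    intro s
    exact Finset.measurable_sum _ fun i _ =>
      hLmeas.comp (measurable_id.prodMk measurable_const)
  -- Z is positive
  have hZint : ∀ s : Fin n → 𝒵,
      Integrable (fun θ => Real.exp (-∑ i, L θ (s i))) π :=
    fun s => pb_integrable_of_bounds ((hgmeas s).neg.exp) (hnumb s)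
  have hZpos : ∀ s, 0 < Z s := by
    intro s
    rw [hZ s]
    calc (0 : ℝ) < Real.exp (-((n : ℝ) * b)) := Real.exp_pos _
      _ = ∫ _, Real.exp (-((n : ℝ) * b)) ∂π := by simp
      _ ≤ ∫ θ, Real.exp (-∑ i, L θ (s i)) ∂π :=
        integral_mono (integrable_const _) (hZint s) fun θ => (hnumb s θ).1
  -- the exponential moment function V
  set V : (Fin n → 𝒵) → ℝ :=
    fun s => ∫ θ, Real.exp (-∑ i, L θ (s i)) / M θ ^ n ∂π with hVdef
  -- joint measurability of the integrand defining V
  have hφmeas : Measurable fun p : (Fin n → 𝒵) × Θ =>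
      Real.exp (-∑ i, L p.2 (p.1 i)) / M p.2 ^ n := by
    have hsum : Measurable fun p : (Fin n → 𝒵) × Θ => ∑ i, L p.2 (p.1 i) :=
      Finset.measurable_sum _ fun i _ =>
        hLmeas.comp (measurable_snd.prodMk ((measurable_pi_apply i).comp measurable_fst))
    exact (hsum.neg.exp).div ((hMmeas.comp measurable_snd).pow_const n)
  have hMnlow : ∀ θ, Real.exp (-b) ^ n ≤ M θ ^ n := fun θ =>
    pow_le_pow_left₀ (Real.exp_pos _).le (hMb θ).1 n
  have hMnpos : ∀ θ, 0 < M θ ^ n := fun θ => pow_pos (hMpos θ) n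
  have hφb : ∀ (s : Fin n → 𝒵) θ, 0 ≤ Real.exp (-∑ i, L θ (s i)) / M θ ^ n
      ∧ Real.exp (-∑ i, L θ (s i)) / M θ ^ n
        ≤ Real.exp (-((n : ℝ) * a)) / Real.exp (-b) ^ n := by
    intro s θ
    constructor
    · exact div_nonneg (Real.exp_pos _).le (hMnpos θ).le
    · exact div_le_div₀ (Real.exp_pos _).le (hnumb s θ).2
        (pow_pos (Real.exp_pos _) n) (hMnlow θ)
  -- V is measurable and bounded
  have hVmeas : Measurable V := by
    rw [hVdef]
    exact (hφmeas.stronglyMeasurable.integral_prod_right').measurable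
  have hVnonneg : ∀ s, 0 ≤ V s :=
    fun s => integral_nonneg fun θ => (hφb s θ).1
  have hVb : ∀ s, 0 ≤ V s ∧ V s ≤ Real.exp (-((n : ℝ) * a)) / Real.exp (-b) ^ n := by
    intro s
    refine ⟨hVnonneg s, ?_⟩
    calc V s ≤ ∫ _, Real.exp (-((n : ℝ) * a)) / Real.exp (-b) ^ n ∂π := by
          refine integral_mono ?_ (integrable_const _) fun θ => (hφb s θ).2
          exact pb_integrable_of_bounds
            (((hgmeas s).neg.exp).div (hMmeas.pow_const n)) (hφb s)
      _ = Real.exp (-((n : ℝ) * a)) / Real.exp (-b) ^ n := by simp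
  have hVintble : Integrable V P := pb_integrable_of_bounds hVmeas hVb
  -- the key identity : ∫ exp (-∑ L θ (s i)) dP = M θ ^ n
  have hMn : ∀ θ, (∫ s, Real.exp (-∑ i, L θ (s i)) ∂P) = M θ ^ n := by
    intro θ
    letI : MeasureSpace 𝒵 := ⟨D⟩
    haveI : SigmaFinite (volume : Measure 𝒵) := by
      change SigmaFinite D; infer_instance
    have key := MeasureTheory.integral_fintype_prod_eq_pow (𝕜 := ℝ) (ι := Fin n)
      (fun z => Real.exp (-L θ z)) (μ := D)
    have hvol : (volume : Measure (Fin n → 𝒵)) = P := rfl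
    rw [← hP] at key
    have hexpand : ∀ s : Fin n → 𝒵,
        Real.exp (-∑ i, L θ (s i)) = ∏ i, Real.exp (-L θ (s i)) := by
      intro s
      rw [← Real.exp_sum]
      congr 1
      rw [← Finset.sum_neg_distrib]
    calc (∫ s, Real.exp (-∑ i, L θ (s i)) ∂P)
        = ∫ s, ∏ i, Real.exp (-L θ (s i)) ∂P := by
          congr 1; ext s; exact hexpand s
      _ = (∫ z, Real.exp (-L θ z) ∂D) ^ Fintype.card (Fin n) := key
      _ = M θ ^ n := by rw [Fintype.card_fin, hMdef]
  -- Fubini : ∫ V dP = 1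
  have hVint1 : ∫ s, V s ∂P = 1 := by
    have hint : Integrable (Function.uncurry fun (s : Fin n → 𝒵) (θ : Θ) =>
        Real.exp (-∑ i, L θ (s i)) / M θ ^ n) (P.prod π) := by
      refine pb_integrable_of_bounds (μ := P.prod π) hφmeas
        (lo := 0) (hi := Real.exp (-((n : ℝ) * a)) / Real.exp (-b) ^ n) ?_
      intro p
      exact hφb p.1 p.2
    calc ∫ s, V s ∂P
        = ∫ θ, ∫ s, Real.exp (-∑ i, L θ (s i)) / M θ ^ n ∂P ∂π :=
          integral_integral_swap hint
      _ = ∫ θ, (1 : ℝ) ∂π := by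
          congr 1; ext θ
          rw [integral_div, hMn θ, div_self (hMnpos θ).ne']
      _ = 1 := by simp
  -- Markov's inequality
  have hmarkov : P {s | 1 / δ ≤ V s} ≤ ENNReal.ofReal δ := by
    have h := mul_meas_ge_le_integral_of_nonneg
      (μ := P) (Filter.Eventually.of_forall hVnonneg) hVintble (1 / δ)
    rw [hVint1] at h
    have ht0 : (0 : ℝ) ≤ (P {s | 1 / δ ≤ V s}).toReal := ENNReal.toReal_nonneg
    have ht : (P {s | 1 / δ ≤ V s}).toReal ≤ δ := by
      calc (P {s | 1 / δ ≤ V s}).toReal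
          = δ * (1 / δ * (P {s | 1 / δ ≤ V s}).toReal) := by
            field_simp
        _ ≤ δ * 1 := mul_le_mul_of_nonneg_left h hδ.le
        _ = δ := mul_one δ
    calc P {s | 1 / δ ≤ V s}
        = ENNReal.ofReal ((P {s | 1 / δ ≤ V s}).toReal) :=
          (ENNReal.ofReal_toReal (measure_ne_top _ _)).symm
      _ ≤ ENNReal.ofReal δ := ENNReal.ofReal_le_ofReal ht
  -- the main pointwise implication
  have hmain : ∀ s : Fin n → 𝒵, V s ≤ 1 / δ →
      ∫ θ, (∫ z, L θ z ∂D) ∂(ρ s) ≤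
        a + c * (1 - Real.exp a * (Z s * δ) ^ (1 / (n : ℝ))) := by
    intro s hVs
    have hZs := hZpos s
    -- density rewriting
    have hdensmeas : Measurable fun θ =>
        Real.toNNReal (Real.exp (-∑ i, L θ (s i)) / Z s) :=
      (((hgmeas s).neg.exp).div_const (Z s)).real_toNNReal
    have hρint : ∀ (h : Θ → ℝ), Measurable h →
        ∫ θ, h θ ∂(ρ s) = ∫ θ, (Real.exp (-∑ i, L θ (s i)) / Z s) * h θ ∂π := by
      intro h hm
      rw [hρ s]
      have hfun : (fun θ => ENNReal.ofReal (Real.exp (-∑ i, L θ (s i)) / Z s))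
          = fun θ => ((Real.toNNReal (Real.exp (-∑ i, L θ (s i)) / Z s) : ℝ≥0) : ℝ≥0∞) :=
        rfl
      rw [hfun, integral_withDensity_eq_integral_smul hdensmeas h]
      congr 1
      ext θ
      rw [NNReal.smul_def, smul_eq_mul, Real.coe_toNNReal _
        (div_nonneg (Real.exp_pos _).le hZs.le)]
    haveI hρprob : IsProbabilityMeasure (ρ s) := by
      constructor
      rw [hρ s, withDensity_apply _ MeasurableSet.univ, Measure.restrict_univ]
      have : ∫⁻ θ, ENNReal.ofReal (Real.exp (-∑ i, L θ (s i)) / Z s) ∂π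
          = ENNReal.ofReal (∫ θ, Real.exp (-∑ i, L θ (s i)) / Z s ∂π) := by
        rw [← ofReal_integral_eq_lintegral_ofReal ((hZint s).div_const (Z s))
          (Filter.Eventually.of_forall fun θ =>
            div_nonneg (Real.exp_pos _).le hZs.le)]
      rw [this, integral_div, ← hZ s, div_self hZs.ne', ENNReal.ofReal_one]
    -- density bounds (for integrability over ρ s we use boundedness directly over π)
    have hdens_nonneg : ∀ θ, 0 ≤ Real.exp (-∑ i, L θ (s i)) / Z s :=
      fun θ => div_nonneg (Real.exp_pos _).le hZs.le
    -- integrability over ρ s of bounded measurable functions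
    have hρintegrable : ∀ (h : Θ → ℝ) , Measurable h → ∀ (lo hi : ℝ),
        (∀ θ, lo ≤ h θ ∧ h θ ≤ hi) → Integrable h (ρ s) :=
      fun h hm lo hi hb => pb_integrable_of_bounds hm hb
    -- notation
    set E : ℝ := ∫ θ, (∫ z, L θ z ∂D) ∂(ρ s) with hEdef
    set m : ℝ := ∫ θ, Real.log (M θ) ∂(ρ s) with hmdef
    have hlogb : ∀ θ, -b ≤ Real.log (M θ) ∧ Real.log (M θ) ≤ -a := by
      intro θ
      constructor
      · calc (-b) = Real.log (Real.exp (-b)) := (Real.log_exp _).symm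
          _ ≤ Real.log (M θ) := Real.log_le_log (Real.exp_pos _) (hMb θ).1
      · calc Real.log (M θ) ≤ Real.log (Real.exp (-a)) :=
            Real.log_le_log (hMpos θ) (hMb θ).2
          _ = -a := Real.log_exp _
    have hlogmeas : Measurable fun θ => Real.log (M θ) := hMmeas.log
    -- Jensen I : exp m ≤ ∫ M dρ
    have hJ1 : Real.exp m ≤ ∫ θ, M θ ∂(ρ s) := by
      have h1 : Real.exp m ≤ ∫ θ, Real.exp (Real.log (M θ)) ∂(ρ s) :=
        pb_exp_integral_le
          (hρintegrable _ hlogmeas _ _ hlogb)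
          (hρintegrable _ hlogmeas.exp (Real.exp (-b)) (Real.exp (-a))
            (fun θ => ⟨Real.exp_le_exp.2 (hlogb θ).1, Real.exp_le_exp.2 (hlogb θ).2⟩))
      calc Real.exp m ≤ ∫ θ, Real.exp (Real.log (M θ)) ∂(ρ s) := h1
        _ = ∫ θ, M θ ∂(ρ s) := by
          congr 1; ext θ; exact Real.exp_log (hMpos θ)
    -- Jensen II : exp (-n m) ≤ ∫ M⁻ⁿ dρ = V / Z
    have hinvb : ∀ θ, Real.exp ((n : ℝ) * a) ≤ Real.exp (-(n : ℝ) * Real.log (M θ))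
        ∧ Real.exp (-(n : ℝ) * Real.log (M θ)) ≤ Real.exp ((n : ℝ) * b) := by
      intro θ
      have hnn : (0 : ℝ) ≤ (n : ℝ) := Nat.cast_nonneg n
      constructor
      · apply Real.exp_le_exp.2
        have := (hlogb θ).2
        nlinarith
      · apply Real.exp_le_exp.2
        have := (hlogb θ).1
        nlinarith
    have hJ2 : Real.exp (-(n : ℝ) * m) ≤ V s / Z s := by
      have h1 : Real.exp (∫ θ, -(n : ℝ) * Real.log (M θ) ∂(ρ s))
          ≤ ∫ θ, Real.exp (-(n : ℝ) * Real.log (M θ)) ∂(ρ s) :=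
        pb_exp_integral_le
          (hρintegrable _ (hlogmeas.const_mul _) (-(n : ℝ) * -a)  (-(n : ℝ) * -b)
            (fun θ => by
              constructor
              · nlinarith [(hlogb θ).2, Nat.cast_nonneg (α := ℝ) n]
              · nlinarith [(hlogb θ).1, Nat.cast_nonneg (α := ℝ) n]))
          (hρintegrable _ ((hlogmeas.const_mul _).exp) _ _ hinvb)
      have h2 : (∫ θ, -(n : ℝ) * Real.log (M θ) ∂(ρ s)) = -(n : ℝ) * m := by
        rw [hmdef, integral_const_mul]
      have h3 : (fun θ => Real.exp (-(n : ℝ) * Real.log (M θ)))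
          = fun θ => 1 / M θ ^ n := by
        ext θ
        rw [show -(n : ℝ) * Real.log (M θ) = (n : ℝ) * (-Real.log (M θ)) by ring,
          Real.exp_nat_mul, Real.exp_neg, Real.exp_log (hMpos θ)]
        rw [inv_pow, one_div]
      have h4 : (∫ θ, 1 / M θ ^ n ∂(ρ s)) = V s / Z s := by
        rw [hρint (fun θ => 1 / M θ ^ n) (measurable_const.div (hMmeas.pow_const n))]
        have heq : (fun θ => Real.exp (-∑ i, L θ (s i)) / Z s * (1 / M θ ^ n))
            = fun θ => (Real.exp (-∑ i, L θ (s i)) / M θ ^ n) / Z s := by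
          ext θ
          field_simp
        rw [heq, integral_div]
      rw [h2, h3] at h1
      rw [h4] at h1
      exact h1
    -- combine: (Z s * δ) ^ (1/n) ≤ exp m
    have hVZ : V s / Z s ≤ 1 / (Z s * δ) := by
      rw [div_le_div_iff₀ hZs (by positivity)]
      calc V s * (Z s * δ) = (V s * δ) * Z s := by ring
        _ ≤ (1 / δ * δ) * Z s := by
          have : V s * δ ≤ 1 / δ * δ := by
            apply mul_le_mul_of_nonneg_right hVs hδ.le
          exact mul_le_mul_of_nonneg_right this hZs.le
        _ = 1 * Z s := by rw [div_mul_cancel₀]; exact hδ.ne'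
    have hZδ : Z s * δ ≤ Real.exp ((n : ℝ) * m) := by
      have h5 : Real.exp (-(n : ℝ) * m) ≤ 1 / (Z s * δ) := le_trans hJ2 hVZ
      have h6 : (0 : ℝ) < Z s * δ := by positivity
      rw [show -(n : ℝ) * m = -((n : ℝ) * m) by ring, Real.exp_neg,
        inv_eq_one_div] at h5
      exact (one_div_le_one_div (Real.exp_pos _) h6).1 h5
    have hrpow : (Z s * δ) ^ (1 / (n : ℝ)) ≤ Real.exp m := by
      have h6 : (0 : ℝ) ≤ Z s * δ := by positivity
      have h7 : (Z s * δ) ^ (1 / (n : ℝ))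
          ≤ (Real.exp ((n : ℝ) * m)) ^ (1 / (n : ℝ)) :=
        Real.rpow_le_rpow h6 hZδ (by positivity)
      calc (Z s * δ) ^ (1 / (n : ℝ)) ≤ (Real.exp ((n : ℝ) * m)) ^ (1 / (n : ℝ)) := h7
        _ = Real.exp m := by
          rw [← Real.exp_mul]
          congr 1
          field_simp
    -- chord bound over ρ
    have hchordρ : (∫ θ, M θ ∂(ρ s)) ≤ Real.exp (-a) - (E - a) * k := by
      have hint3 : Integrable (fun θ => (∫ z, L θ z ∂D) - a) (ρ s) := by
        exact (hρintegrable _ h𝓛meas _ _ h𝓛b).sub (integrable_const a)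
      have hint4 : Integrable (fun θ => ((∫ z, L θ z ∂D) - a) * k) (ρ s) := by
        exact hint3.mul_const k
      have h8 : (∫ θ, M θ ∂(ρ s))
          ≤ ∫ θ, (Real.exp (-a) - ((∫ z, L θ z ∂D) - a) * k) ∂(ρ s) := by
        apply integral_mono
          (hρintegrable _ hMmeas _ _ hMb)
          (by exact (integrable_const (Real.exp (-a))).sub hint4)
          (fun θ => hMchord θ)
      calc (∫ θ, M θ ∂(ρ s))
          ≤ ∫ θ, (Real.exp (-a) - ((∫ z, L θ z ∂D) - a) * k) ∂(ρ s) := h8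
        _ = Real.exp (-a) - (E - a) * k := by
          rw [integral_sub (integrable_const _) hint4,
            integral_mul_const,
            integral_sub (hρintegrable _ h𝓛meas _ _ h𝓛b) (integrable_const a)]
          simp [hEdef]
    -- final algebra
    have hkey : (Z s * δ) ^ (1 / (n : ℝ)) ≤ Real.exp (-a) - (E - a) * k :=
      le_trans hrpow (le_trans hJ1 hchordρ)
    have hexpa : Real.exp (-a) * Real.exp a = 1 := by
      rw [← Real.exp_add]; simp
    have heq2 : c * (1 - Real.exp a * (Z s * δ) ^ (1 / (n : ℝ))) * k
        = Real.exp (-a) - (Z s * δ) ^ (1 / (n : ℝ)) := by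
      have : c * (1 - Real.exp a * (Z s * δ) ^ (1 / (n : ℝ))) * k
          = (c * k) * 1 - (c * k) * Real.exp a * (Z s * δ) ^ (1 / (n : ℝ)) := by ring
      rw [this, hck]
      rw [hexpa]
      ring
    have hfinal : (E - a) * k ≤ c * (1 - Real.exp a * (Z s * δ) ^ (1 / (n : ℝ))) * k := by
      rw [heq2]
      linarith
    have := le_of_mul_le_mul_right hfinal hk0
    linarith
  -- put everything together
  have hsubset : {s | 1 / δ ≤ V s}ᶜ ⊆
      {s | ∫ θ, (∫ z, L θ z ∂D) ∂(ρ s) ≤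
        a + c * (1 - Real.exp a * (Z s * δ) ^ (1 / (n : ℝ)))} := by
    intro s hs
    simp only [Set.mem_compl_iff, Set.mem_setOf_eq, not_le] at hs
    exact hmain s hs.le
  have hms : MeasurableSet {s | 1 / δ ≤ V s} :=
    measurableSet_le measurable_const hVmeas
  calc ENNReal.ofReal (1 - δ)
      = 1 - ENNReal.ofReal δ := by
        rw [← ENNReal.ofReal_one, ← ENNReal.ofReal_sub _ hδ.le]
    _ ≤ 1 - P {s | 1 / δ ≤ V s} := tsub_le_tsub_left hmarkov 1
    _ = P {s | 1 / δ ≤ V s}ᶜ := by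
        rw [measure_compl hms (measure_ne_top _ _)]
        simp
    _ ≤ _ := measure_mono hsubset
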